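/- Let (X, μ, T₁, T₂) be a probability-preserving system where T₁ and T₂ are commuting invertible measure-preserving transformations whose joint action (as a ℤ²-action) is ergodic. If A₁ ⊆ X is measurable and T₁-invariant and A₂ ⊆ X is measurable and T₂-invariant, then μ(A₁ ∩ A₂) = μ(A₁)·μ(A₂). -/

import Mathlib

open MeasureTheory Filter Set

section Aux

variable {X : Type*} [MeasurableSpace X] {μ : Measure X}

/-- The Koopman operator on `L²` of a measure-preserving map. -/
noncomputable def koopman (μ : Measure X) {T : X → X} (hT : MeasurePreserving T μ μ) :
    Lp ℝ 2 μ →L[ℝ] Lp ℝ 2 μ where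
  toLinearMap :=
    { toFun := Lp.compMeasurePreserving T hT
      map_add' := map_add _
      map_smul' := fun c g => by
        apply Lp.ext
        have h1 := Lp.coeFn_compMeasurePreserving (c • g) hT
        have h2 := Lp.coeFn_compMeasurePreserving g hT
        have h4 := Lp.coeFn_smul c (Lp.compMeasurePreserving T hT g)
        have h3 := hT.quasiMeasurePreserving.ae_eq_comp (Lp.coeFn_smul c g)
        filter_upwards [h1, h4, h2, h3] with x e1 e4 e2 e3
        simp only [Function.comp_apply, Pi.smul_apply] at e1 e3 e4
        simp only [RingHom.id_apply, Function.comp_apply] at *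
        rw [e1, e3, e4, e2] }
  cont := (Lp.isometry_compMeasurePreserving hT).continuous

theorem koopman_ae (μ : Measure X) {T : X → X} (hT : MeasurePreserving T μ μ) (g : Lp ℝ 2 μ) :
    koopman μ hT g =ᵐ[μ] fun x => g (T x) :=
  Lp.coeFn_compMeasurePreserving g hT

theorem koopman_norm_le (μ : Measure X) {T : X → X} (hT : MeasurePreserving T μ μ) :
    ‖koopman μ hT‖ ≤ 1 := by
  refine ContinuousLinearMap.opNorm_le_bound _ zero_le_one fun g => ?_
  rw [one_mul]
  exact le_of_eq (Lp.norm_compMeasurePreserving g hT)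

end Aux

set_option maxHeartbeats 1000000 in
open Filter Topology in
/-- If the joint ℤ²-action of two commuting invertible measure-preserving
transformations is ergodic, then a `T₁`-invariant set and a `T₂`-invariant set
are independent. -/
theorem stmt_0 {X : Type*} [MeasurableSpace X] (μ : Measure X) [IsProbabilityMeasure μ]
    (T₁ T₂ : Equiv.Perm X)
    (hT₁ : MeasurePreserving T₁ μ μ) (hT₁' : MeasurePreserving T₁.symm μ μ)
    (hT₂ : MeasurePreserving T₂ μ μ) (hT₂' : MeasurePreserving T₂.symm μ μ)
    (hcomm : ∀ x, T₁ (T₂ x) = T₂ (T₁ x))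
    (herg : ∀ S : Set X, MeasurableSet S → μ (symmDiff (⇑T₁ ⁻¹' S) S) = 0 →
      μ (symmDiff (⇑T₂ ⁻¹' S) S) = 0 → μ S = 0 ∨ μ S = 1)
    (A₁ A₂ : Set X) (hA₁ : MeasurableSet A₁) (hA₂ : MeasurableSet A₂)
    (hinv₁ : μ (symmDiff (⇑T₁ ⁻¹' A₁) A₁) = 0)
    (hinv₂ : μ (symmDiff (⇑T₂ ⁻¹' A₂) A₂) = 0) :
    μ (A₁ ∩ A₂) = μ A₁ * μ A₂ := by
  classical
  set U₁ := koopman μ hT₁ with hU₁def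
  set U₂ := koopman μ hT₂ with hU₂def
  -- commutation of the Koopman operators
  have hUcomm : ∀ h : Lp ℝ 2 μ, U₁ (U₂ h) = U₂ (U₁ h) := by
    intro h
    apply Lp.ext
    have e1 := koopman_ae μ hT₁ (U₂ h)
    have e2 := hT₁.quasiMeasurePreserving.ae_eq_comp (koopman_ae μ hT₂ h)
    have e3 := koopman_ae μ hT₂ (U₁ h)
    have e4 := hT₂.quasiMeasurePreserving.ae_eq_comp (koopman_ae μ hT₁ h)
    filter_upwards [e1, e2, e3, e4] with x d1 d2 d3 d4
    have : (↑↑(U₂ h) ∘ ⇑T₁) x = ((fun y => h (T₂ y)) ∘ ⇑T₁) x := d2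
    have h4 : (↑↑(U₁ h) ∘ ⇑T₂) x = ((fun y => h (T₁ y)) ∘ ⇑T₂) x := d4
    simp only [Function.comp_apply] at this h4
    rw [d1, d3, this, h4, hcomm]
  -- the two indicator functions
  set f₁ : Lp ℝ 2 μ := indicatorConstLp 2 hA₁ (measure_ne_top μ A₁) (1:ℝ) with hf₁def
  set f₂ : Lp ℝ 2 μ := indicatorConstLp 2 hA₂ (measure_ne_top μ A₂) (1:ℝ) with hf₂def
  -- fixed-point facts
  have indic_inv : ∀ (T : Equiv.Perm X) (A : Set X), μ (symmDiff (⇑T ⁻¹' A) A) = 0 →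
      (fun x => A.indicator (fun _ => (1:ℝ)) (T x)) =ᵐ[μ] A.indicator (fun _ => (1:ℝ)) := by
    intro T A hinv
    have hsub : {x | ¬ (A.indicator (fun _ => (1:ℝ)) (T x) = A.indicator (fun _ => (1:ℝ)) x)}
        ⊆ symmDiff (⇑T ⁻¹' A) A := by
      intro x hx
      by_cases h1 : T x ∈ A <;> by_cases h2 : x ∈ A
      · exact absurd (by simp [Set.indicator_of_mem, h1, h2]) hx
      · exact Set.mem_symmDiff.2 (Or.inl ⟨h1, h2⟩)
      · exact Set.mem_symmDiff.2 (Or.inr ⟨h2, h1⟩)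
      · exact absurd (by simp [Set.indicator_of_notMem, h1, h2]) hx
    exact (measure_mono_null hsub hinv :)
  have hfix : ∀ (T : Equiv.Perm X) (hT : MeasurePreserving T μ μ) (A : Set X)
      (hA : MeasurableSet A) (hinv : μ (symmDiff (⇑T ⁻¹' A) A) = 0),
      koopman μ hT (indicatorConstLp 2 hA (measure_ne_top μ A) (1:ℝ))
        = indicatorConstLp 2 hA (measure_ne_top μ A) (1:ℝ) := by
    intro T hT A hA hinv
    apply Lp.ext
    have e1 := koopman_ae μ hT (indicatorConstLp 2 hA (measure_ne_top μ A) (1:ℝ))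
    have e2 := hT.quasiMeasurePreserving.ae_eq_comp
      (indicatorConstLp_coeFn (p := 2) (hs := hA) (hμs := measure_ne_top μ A) (c := (1:ℝ)))
    have e3 := indicatorConstLp_coeFn (p := 2) (hs := hA) (hμs := measure_ne_top μ A) (c := (1:ℝ))
    filter_upwards [e1, e2, e3, indic_inv T A hinv] with x d1 d2 d3 d4
    simp only [Function.comp_apply] at d2
    rw [d1, d3]
    exact d2.trans d4
  have hUf₁ : U₁ f₁ = f₁ := hfix T₁ hT₁ A₁ hA₁ hinv₁
  have hUf₂ : U₂ f₂ = f₂ := hfix T₂ hT₂ A₂ hA₂ hinv₂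
  -- the projection onto T₂-invariant functions
  set K := LinearMap.eqLocus (U₂ : Lp ℝ 2 μ →ₗ[ℝ] Lp ℝ 2 μ) 1 with hKdef
  haveI hKc : CompleteSpace K :=
    (isClosed_eq U₂.continuous continuous_id).completeSpace_coe
  set g : Lp ℝ 2 μ := (K.orthogonalProjectionOnto f₁ : Lp ℝ 2 μ) with hgdef
  have hU₂g : U₂ g = g := (K.orthogonalProjectionOnto f₁).2
  have hlim : Tendsto (fun N => birkhoffAverage ℝ (⇑U₂) _root_.id N f₁) atTop (𝓝 g) :=
    U₂.tendsto_birkhoffAverage_orthogonalProjection (koopman_norm_le μ hT₂) f₁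
  have hcommIter : ∀ (n : ℕ) (h : Lp ℝ 2 μ), U₁ ((⇑U₂)^[n] h) = (⇑U₂)^[n] (U₁ h) := by
    intro n
    induction n with
    | zero => intro h; simp
    | succ n ih =>
      intro h
      rw [Function.iterate_succ_apply, Function.iterate_succ_apply, ih, hUcomm]
  have hAvg : ∀ N, U₁ (birkhoffAverage ℝ (⇑U₂) _root_.id N f₁)
      = birkhoffAverage ℝ (⇑U₂) _root_.id N f₁ := by
    intro N
    unfold birkhoffAverage birkhoffSum
    rw [ContinuousLinearMap.map_smul, map_sum]
    congr 1
    refine Finset.sum_congr rfl fun n _ => ?_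
    simp only [id_eq]
    rw [hcommIter, hUf₁]
  have hU₁g : U₁ g = g := by
    have h2 : Tendsto (fun N => U₁ (birkhoffAverage ℝ (⇑U₂) _root_.id N f₁)) atTop (𝓝 (U₁ g)) :=
      (U₁.continuous.tendsto g).comp hlim
    have h3 : Tendsto (fun N => birkhoffAverage ℝ (⇑U₂) _root_.id N f₁) atTop (𝓝 (U₁ g)) := by
      simpa only [hAvg] using h2
    exact tendsto_nhds_unique h3 hlim
  -- g is a.e. invariant under both maps
  have hGmeas : StronglyMeasurable (⇑g : X → ℝ) := Lp.stronglyMeasurable g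
  have hG : ∀ (T : Equiv.Perm X) (hT : MeasurePreserving T μ μ), koopman μ hT g = g →
      (fun x => g (T x)) =ᵐ[μ] ⇑g := by
    intro T hT hfixg
    have := koopman_ae μ hT g
    rw [hfixg] at this
    exact this.symm
  have hG₁ : (fun x => g (T₁ x)) =ᵐ[μ] ⇑g := hG T₁ hT₁ hU₁g
  have hG₂ : (fun x => g (T₂ x)) =ᵐ[μ] ⇑g := hG T₂ hT₂ hU₂g
  -- g is a.e. constant
  have hconst : ∃ c : ℝ, ⇑g =ᵐ[μ] Function.const X c := by
    refine exists_eventuallyEq_const_of_forall_separating (l := ae μ) MeasurableSet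
      fun V hV => ?_
    set S : Set X := ⇑g ⁻¹' V with hSdef
    have hSm : MeasurableSet S := hGmeas.measurable hV
    have key : ∀ (T : Equiv.Perm X), ((fun x => g (T x)) =ᵐ[μ] ⇑g) →
        μ (symmDiff (⇑T ⁻¹' S) S) = 0 := by
      intro T hae
      have h0 : μ {x | ¬ (g (T x) = g x)} = 0 := hae
      refine measure_mono_null (fun x hx => ?_) h0
      intro he
      rcases Set.mem_symmDiff.1 hx with ⟨h1, h2⟩ | ⟨h1, h2⟩
      · exact h2 (by rwa [Set.mem_preimage, hSdef, Set.mem_preimage, he] at h1)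
      · exact h2 (by rw [Set.mem_preimage, hSdef, Set.mem_preimage, he]; exact h1)
    rcases herg S hSm (key T₁ hG₁) (key T₂ hG₂) with h0 | h1
    · exact Or.inr (ae_iff.2 (by simpa [S, Set.preimage] using h0))
    · refine Or.inl ?_
      have hc : μ Sᶜ = 0 := by
        rw [measure_compl hSm (measure_ne_top _ _), h1, measure_univ, tsub_self]
      exact (ae_iff (p := fun x => g x ∈ V)).2 hc
  obtain ⟨c, hc⟩ := hconst
  -- inner products with members of K agree for f₁ and g
  have hproj : ∀ w : Lp ℝ 2 μ, w ∈ K → inner (𝕜 := ℝ) w f₁ = inner (𝕜 := ℝ) w g := by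
    intro w hw
    have := K.starProjection_inner_eq_zero f₁ w hw
    rw [inner_sub_left, sub_eq_zero] at this
    calc inner (𝕜 := ℝ) w f₁ = inner (𝕜 := ℝ) f₁ w := real_inner_comm _ _
      _ = inner (𝕜 := ℝ) g w := this
      _ = inner (𝕜 := ℝ) w g := real_inner_comm _ _
  -- the constant-one function lies in K
  set w₀ : Lp ℝ 2 μ := indicatorConstLp 2 MeasurableSet.univ (measure_ne_top μ Set.univ) (1:ℝ)
    with hw₀def
  have hw₀K : w₀ ∈ K := by
    have : μ (symmDiff (⇑T₂ ⁻¹' (Set.univ : Set X)) Set.univ) = 0 := by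
      simp
    exact hfix T₂ hT₂ Set.univ MeasurableSet.univ this
  have hf₂K : f₂ ∈ K := hUf₂
  -- compute the four inner products
  have hinner₀f₁ : inner (𝕜 := ℝ) w₀ f₁ = (μ A₁).toReal := by
    rw [hw₀def, MeasureTheory.L2.inner_indicatorConstLp_eq_setIntegral_inner]
    simp only [RCLike.inner_apply, RCLike.conj_to_real, one_mul, mul_one, Measure.restrict_univ]
    rw [integral_congr_ae
      (indicatorConstLp_coeFn (p := 2) (hs := hA₁) (hμs := measure_ne_top μ A₁) (c := (1:ℝ)))]
    rw [integral_indicator_const _ hA₁]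
    simp [measureReal_def]
  have hinner₀g : inner (𝕜 := ℝ) w₀ g = c := by
    rw [hw₀def, MeasureTheory.L2.inner_indicatorConstLp_eq_setIntegral_inner]
    simp only [RCLike.inner_apply, RCLike.conj_to_real, one_mul, mul_one, Measure.restrict_univ]
    rw [integral_congr_ae hc]
    simp
  have hinnerf₂f₁ : inner (𝕜 := ℝ) f₂ f₁ = (μ (A₁ ∩ A₂)).toReal := by
    rw [hf₂def, MeasureTheory.L2.inner_indicatorConstLp_eq_setIntegral_inner]
    simp only [RCLike.inner_apply, RCLike.conj_to_real, one_mul, mul_one]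
    rw [setIntegral_congr_ae hA₂ ((indicatorConstLp_coeFn (p := 2) (hs := hA₁)
      (hμs := measure_ne_top μ A₁) (c := (1:ℝ))).mono fun x hx _ => hx)]
    rw [setIntegral_indicator hA₁]
    simp [Set.inter_comm, measureReal_def]
  have hinnerf₂g : inner (𝕜 := ℝ) f₂ g = (μ A₂).toReal * c := by
    rw [hf₂def, MeasureTheory.L2.inner_indicatorConstLp_eq_setIntegral_inner]
    simp only [RCLike.inner_apply, RCLike.conj_to_real, one_mul, mul_one]
    rw [setIntegral_congr_ae hA₂ (hc.mono fun x hx _ => hx)]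
    simp [Function.const, mul_comm, measureReal_def]
  -- conclude
  have e1 : (μ A₁).toReal = c := by
    rw [← hinner₀f₁, hproj w₀ hw₀K, hinner₀g]
  have e2 : (μ (A₁ ∩ A₂)).toReal = (μ A₂).toReal * c := by
    rw [← hinnerf₂f₁, hproj f₂ hf₂K, hinnerf₂g]
  have e3 : (μ (A₁ ∩ A₂)).toReal = (μ A₁).toReal * (μ A₂).toReal := by
    rw [e2, ← e1, mul_comm]
  have := ENNReal.toReal_eq_toReal_iff' (measure_ne_top μ (A₁ ∩ A₂))
    (ENNReal.mul_ne_top (measure_ne_top μ A₁) (measure_ne_top μ A₂))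
  rw [← this.1 (by rw [ENNReal.toReal_mul]; exact e3)]
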